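/- arXiv:0809.1883 — 4 statements merged into one kernel-verified Lean document; each statement's English description precedes it below -/
import Mathlib

section
/- If positive reals a₁, …, aₙ contain k+1 elements linearly independent over ℚ, then the box a₁×⋯×aₙ cannot be partitioned into finitely many boxes each having at most k distinct side lengths. -/
/-- An axis-parallel box in ℝⁿ with positive side lengths. -/
structure Box (n : ℕ) where
  lower : Fin n → ℝ
  upper : Fin n → ℝ
  lower_lt_upper : ∀ i, lower i < upper i

namespace Box

/-- The closed box as a subset of ℝⁿ. -/
def toSet {n : ℕ} (B : Box n) : Set (Fin n → ℝ) :=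
  Set.univ.pi fun i => Set.Icc (B.lower i) (B.upper i)

/-- The open interior of the box. -/
def interiorSet {n : ℕ} (B : Box n) : Set (Fin n → ℝ) :=
  Set.univ.pi fun i => Set.Ioo (B.lower i) (B.upper i)

/-- The side length of the box in direction `i`. -/
def side {n : ℕ} (B : Box n) (i : Fin n) : ℝ := B.upper i - B.lower i

end Box

/-- The boxes `t` form a finite partition (dissection) of `B`:
pairwise disjoint interiors, and their union covers `B`. -/
def IsDissection {n m : ℕ} (B : Box n) (t : Fin m → Box n) : Prop :=
  (∀ i j, i ≠ j → Disjoint (t i).interiorSet (t j).interiorSet) ∧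
  (⋃ i, (t i).toSet) = B.toSet

/-- `P` is cut by a hyperplane parallel to a pair of its faces into `P₁` and `P₂`. -/
def IsSplit {n : ℕ} (P P₁ P₂ : Box n) : Prop :=
  ∃ (j : Fin n) (c : ℝ), P.lower j < c ∧ c < P.upper j ∧
    P₁.lower = P.lower ∧ P₁.upper = Function.update P.upper j c ∧
    P₂.lower = Function.update P.lower j c ∧ P₂.upper = P.upper

noncomputable section NoKBarAux

open Function Set

variable {n m : ℕ}

/-- Convert our `Box` to a Mathlib `BoxIntegral.Box`. -/
def Box.toBI (B : Box n) : BoxIntegral.Box (Fin n) := ⟨B.lower, B.upper, B.lower_lt_upper⟩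

lemma Box.mem_toBI {B : Box n} {x : Fin n → ℝ} :
    x ∈ B.toBI ↔ ∀ i, B.lower i < x i ∧ x i ≤ B.upper i := by
  simp [Box.toBI, BoxIntegral.Box.mem_def, Set.mem_Ioc]

lemma Box.mem_toSet {B : Box n} {x : Fin n → ℝ} :
    x ∈ B.toSet ↔ ∀ i, B.lower i ≤ x i ∧ x i ≤ B.upper i := by
  simp [Box.toSet, Set.mem_Icc, Pi.le_def, forall_and]

lemma Box.mem_interiorSet {B : Box n} {x : Fin n → ℝ} :
    x ∈ B.interiorSet ↔ ∀ i, B.lower i < x i ∧ x i < B.upper i := by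
  simp [Box.interiorSet, Set.mem_Ioo]

lemma Box.toBI_le_toBI {P B : Box n} (h : P.toSet ⊆ B.toSet) : P.toBI ≤ B.toBI := by
  rw [BoxIntegral.Box.le_iff_bounds]
  have h1 : P.lower ∈ P.toSet := Box.mem_toSet.2 fun i => ⟨le_rfl, (P.lower_lt_upper i).le⟩
  have h2 : P.upper ∈ P.toSet := Box.mem_toSet.2 fun i => ⟨(P.lower_lt_upper i).le, le_rfl⟩
  exact ⟨fun i => (Box.mem_toSet.1 (h h1) i).1, fun i => (Box.mem_toSet.1 (h h2) i).2⟩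

lemma Box.disjoint_toBI {P Q : Box n} (h : Disjoint P.interiorSet Q.interiorSet) :
    Disjoint (P.toBI : Set (Fin n → ℝ)) (Q.toBI : Set (Fin n → ℝ)) := by
  rw [Set.disjoint_left] at h ⊢
  intro x hxP hxQ
  rw [BoxIntegral.Box.mem_coe, Box.mem_toBI] at hxP hxQ
  set y : Fin n → ℝ := fun c => (max (P.lower c) (Q.lower c) + x c) / 2 with hy
  have key : ∀ c, max (P.lower c) (Q.lower c) < y c ∧ y c < x c := by
    intro c
    have h1 : max (P.lower c) (Q.lower c) < x c := max_lt (hxP c).1 (hxQ c).1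
    constructor <;> (simp only [hy]; linarith)
  have hyP : y ∈ P.interiorSet := Box.mem_interiorSet.2 fun c =>
    ⟨lt_of_le_of_lt (le_max_left _ _) (key c).1, lt_of_lt_of_le (key c).2 (hxP c).2⟩
  have hyQ : y ∈ Q.interiorSet := Box.mem_interiorSet.2 fun c =>
    ⟨lt_of_le_of_lt (le_max_right _ _) (key c).1, lt_of_lt_of_le (key c).2 (hxQ c).2⟩
  exact h hyP hyQ

lemma exists_mem_toBI {B : Box n} {t : Fin m → Box n} (hd : IsDissection B t)
    {x : Fin n → ℝ} (hx : x ∈ B.toBI) : ∃ i, x ∈ (t i).toBI := by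
  rw [Box.mem_toBI] at hx
  set y : ℕ → Fin n → ℝ := fun p c => x c - (x c - B.lower c) / (p + 2) with hy
  have hyB : ∀ p, y p ∈ B.toSet := by
    intro p
    rw [Box.mem_toSet]
    intro c
    have h0 : (0:ℝ) < (p:ℝ) + 2 := by positivity
    have h1 : 0 < x c - B.lower c := by linarith [(hx c).1]
    have h2 : (x c - B.lower c) / ((p:ℝ) + 2) ≤ x c - B.lower c :=
      div_le_self h1.le (by linarith)
    have h3 : 0 < (x c - B.lower c) / ((p:ℝ) + 2) := by positivity
    constructor
    · simp only [hy]; linarith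
    · simp only [hy]; linarith [(hx c).2]
  have hyU : ∀ p, ∃ i, y p ∈ (t i).toSet := by
    intro p
    have h := hyB p
    rw [← hd.2] at h
    simpa using h
  choose g hg using hyU
  obtain ⟨i, hi⟩ := Finite.exists_infinite_fiber g
  have hinf : (g ⁻¹' {i}).Infinite := Set.infinite_coe_iff.1 hi
  refine ⟨i, Box.mem_toBI.2 fun c => ?_⟩
  obtain ⟨p0, hp0⟩ := hinf.nonempty
  have hgp0 : g p0 = i := hp0
  have hyp0 := Box.mem_toSet.1 (hgp0 ▸ hg p0) c
  constructor
  · have h1 : 0 < x c - B.lower c := by linarith [(hx c).1]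
    have h3 : 0 < (x c - B.lower c) / ((p0:ℝ) + 2) := by positivity
    have : y p0 c < x c := by simp only [hy]; linarith
    linarith [hyp0.1]
  · by_contra hcon
    push_neg at hcon
    set δ := x c - (t i).upper c with hδ
    have hδ0 : 0 < δ := by simp only [hδ]; linarith
    obtain ⟨p, hp, hplarge⟩ := hinf.exists_gt ⌈(x c - B.lower c) / δ⌉₊
    have hgp : g p = i := hp
    have hyp := Box.mem_toSet.1 (hgp ▸ hg p) c
    have h1 : 0 < x c - B.lower c := by linarith [(hx c).1]
    have hple : (x c - B.lower c) / δ < (p:ℝ) + 2 := by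
      calc (x c - B.lower c) / δ ≤ (⌈(x c - B.lower c) / δ⌉₊ : ℝ) := Nat.le_ceil _
        _ < (p:ℝ) := by exact_mod_cast hplarge
        _ < (p:ℝ) + 2 := by linarith
    have hsmall : (x c - B.lower c) / ((p:ℝ) + 2) < δ := by
      rw [div_lt_iff₀ (by positivity)]
      rw [div_lt_iff₀ hδ0] at hple
      linarith
    have : (t i).upper c < y p c := by simp only [hy, hδ] at hsmall ⊢; linarith
    linarith [hyp.2]

lemma Box.interior_nonempty (P : Box n) : P.interiorSet.Nonempty := by
  refine ⟨fun c => (P.lower c + P.upper c) / 2, Box.mem_interiorSet.2 fun c => ?_⟩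
  constructor <;> linarith [P.lower_lt_upper c]

lemma toBI_inj_of_dissection {B : Box n} {t : Fin m → Box n} (hd : IsDissection B t) :
    Function.Injective fun i => (t i).toBI := by
  intro i j hij
  by_contra hne
  have hdisj := hd.1 i j hne
  have hlow : (t i).lower = (t j).lower := congrArg BoxIntegral.Box.lower hij
  have hup : (t i).upper = (t j).upper := congrArg BoxIntegral.Box.upper hij
  obtain ⟨z, hz⟩ := (t i).interior_nonempty
  have hz' : z ∈ (t j).interiorSet := by
    rw [Box.mem_interiorSet] at hz ⊢
    intro c
    rw [← congrFun hlow c, ← congrFun hup c]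
    exact hz c
  exact Set.disjoint_left.1 hdisj hz hz'

end NoKBarAux

open Function Set in
/-- If among the sides there are `k + 1` numbers linearly independent over `ℚ`,
the box cannot be partitioned into `k`-bars. -/
theorem no_kbar_partition_of_independent_sides (n k : ℕ) (a : Fin n → ℝ)
    (ha : ∀ i, 0 < a i) (s : Fin (k + 1) → Fin n) (hs : Function.Injective s)
    (hli : LinearIndependent ℚ (a ∘ s)) :
    ∀ B : Box n, B.side = a →
      ¬ ∃ (m : ℕ) (t : Fin m → Box n), IsDissection B t ∧
        ∀ i, (Finset.univ.image (t i).side).card ≤ k := by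
  intro B hB
  rintro ⟨m, t, hd, hbar⟩
  classical
  -- injectivity of the values a ∘ s
  have hinj : Function.Injective (a ∘ s) := hli.injective
  -- extend to a basis of ℝ over ℚ
  have hli' : LinearIndepOn ℚ id (Set.range (a ∘ s)) := (linearIndepOn_id_range_iff hinj).mpr hli
  let b : Module.Basis _ ℚ ℝ := Module.Basis.extend hli'
  have hmem : ∀ r : Fin (k+1), a (s r) ∈ hli'.extend (Set.subset_univ (Set.range (a ∘ s))) :=
    fun r => hli'.subset_extend _ ⟨r, rfl⟩
  -- dual functionals
  let f : Fin (k+1) → (ℝ →ₗ[ℚ] ℚ) := fun r => b.coord ⟨a (s r), hmem r⟩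
  have hdelta : ∀ r c, f r (a (s c)) = if r = c then 1 else 0 := by
    intro r c
    have h1 : a (s c) = b ⟨a (s c), hmem c⟩ := (Module.Basis.extend_apply_self hli' ⟨a (s c), hmem c⟩).symm
    have h2 : b.repr (a (s c)) = Finsupp.single (⟨a (s c), hmem c⟩ :
        hli'.extend (Set.subset_univ (Set.range (a ∘ s)))) 1 := by
      conv_lhs => rw [h1]
      exact b.repr_self _
    have : f r (a (s c)) = Finsupp.single (⟨a (s c), hmem c⟩ :
        hli'.extend (Set.subset_univ (Set.range (a ∘ s)))) 1 ⟨a (s r), hmem r⟩ := by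
      show b.coord _ _ = _
      rw [Module.Basis.coord_apply, h2]
    rw [this, Finsupp.single_apply]
    by_cases hrc : r = c
    · subst hrc; simp
    · have hne : (⟨a (s c), hmem c⟩ : hli'.extend (Set.subset_univ (Set.range (a ∘ s)))) ≠
          ⟨a (s r), hmem r⟩ := by
        intro hcon
        exact hrc (hinj (Subtype.ext_iff.1 hcon)).symm
      simp [hne, hrc]
  -- auxiliary functionals not vanishing on a j
  have hexh : ∀ j : Fin n, ∃ φ : ℝ →ₗ[ℚ] ℚ, φ (a j) ≠ 0 := by
    intro j
    have h0 : a j ≠ 0 := (ha j).ne'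
    have hrep : b.repr (a j) ≠ 0 := by
      intro hrep
      exact h0 (by simpa using (map_eq_zero_iff b.repr b.repr.injective).1 hrep)
    obtain ⟨idx, hidx⟩ := Finsupp.ne_iff.1 hrep
    exact ⟨b.coord idx, by simpa [Module.Basis.coord_apply] using hidx⟩
  choose h hhne using hexh
  -- the additive "measure"
  set sc : Finset (Fin n) := (Finset.univ.image s)ᶜ with hsc
  set ν : BoxIntegral.Box (Fin n) → ℚ := fun J =>
    (Matrix.of fun r c : Fin (k+1) => f r (J.upper (s c) - J.lower (s c))).det *
      ∏ j ∈ sc, h j (J.upper j - J.lower j) with hν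
  have hsplit : ∀ I : BoxIntegral.Box (Fin n), (I : WithTop (BoxIntegral.Box (Fin n))) ≤ ⊤ →
      ∀ {i x}, x ∈ Set.Ioo (I.lower i) (I.upper i) →
      (I.splitLower i x).elim' 0 ν + (I.splitUpper i x).elim' 0 ν = ν I := by
    intro I _ i x hx
    rw [BoxIntegral.Box.splitLower_def hx, BoxIntegral.Box.splitUpper_def hx]
    show ν ⟨I.lower, Function.update I.upper i x, _⟩ +
      ν ⟨Function.update I.lower i x, I.upper, _⟩ = ν I
    by_cases hi : ∃ c0, s c0 = i
    · obtain ⟨c0, rfl⟩ := hi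
      set M : Matrix (Fin (k+1)) (Fin (k+1)) ℚ :=
        Matrix.of fun r c : Fin (k+1) => f r (I.upper (s c) - I.lower (s c)) with hM
      have hM1 : (Matrix.of fun r c : Fin (k+1) =>
          f r (Function.update I.upper (s c0) x (s c) - I.lower (s c))) =
          M.updateCol c0 (fun r => f r (x - I.lower (s c0))) := by
        ext r c
        rw [Matrix.of_apply, Matrix.updateCol_apply]
        by_cases hc : c = c0
        · subst hc; rw [if_pos rfl, Function.update_self]
        · rw [if_neg hc, Function.update_of_ne (fun hcon => hc (hs hcon))]; rfl
      have hM2 : (Matrix.of fun r c : Fin (k+1) =>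
          f r (I.upper (s c) - Function.update I.lower (s c0) x (s c))) =
          M.updateCol c0 (fun r => f r (I.upper (s c0) - x)) := by
        ext r c
        rw [Matrix.of_apply, Matrix.updateCol_apply]
        by_cases hc : c = c0
        · subst hc; rw [if_pos rfl, Function.update_self]
        · rw [if_neg hc, Function.update_of_ne (fun hcon => hc (hs hcon))]; rfl
      have hMsum : M = M.updateCol c0
          ((fun r => f r (x - I.lower (s c0))) + (fun r => f r (I.upper (s c0) - x))) := by
        ext r c
        rw [Matrix.updateCol_apply]
        by_cases hc : c = c0
        · subst hc
          rw [if_pos rfl, Pi.add_apply, ← map_add, hM, Matrix.of_apply]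
          congr 1
          ring
        · rw [if_neg hc]
      have hprod1 : ∀ j ∈ sc, h j (Function.update I.upper (s c0) x j - I.lower j) =
          h j (I.upper j - I.lower j) := by
        intro j hj
        have : j ≠ s c0 := by
          intro hcon
          rw [hsc, Finset.mem_compl] at hj
          exact hj (hcon ▸ Finset.mem_image_of_mem s (Finset.mem_univ c0))
        rw [Function.update_of_ne this]
      have hprod2 : ∀ j ∈ sc, h j (I.upper j - Function.update I.lower (s c0) x j) =
          h j (I.upper j - I.lower j) := by
        intro j hj
        have : j ≠ s c0 := by
          intro hcon
          rw [hsc, Finset.mem_compl] at hj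
          exact hj (hcon ▸ Finset.mem_image_of_mem s (Finset.mem_univ c0))
        rw [Function.update_of_ne this]
      simp only [hν]
      rw [hM1, hM2, Finset.prod_congr rfl hprod1, Finset.prod_congr rfl hprod2]
      rw [show (Matrix.of fun r c : Fin (k+1) => f r (I.upper (s c) - I.lower (s c))) = M from rfl]
      nth_rewrite 3 [hMsum]
      rw [Matrix.det_updateCol_add]
      ring
    · push_neg at hi
      have hisc : i ∈ sc := by
        rw [hsc, Finset.mem_compl]
        intro hcon
        obtain ⟨c0, -, hc0⟩ := Finset.mem_image.1 hcon
        exact hi c0 hc0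
      have hMeq1 : (Matrix.of fun r c : Fin (k+1) =>
          f r (Function.update I.upper i x (s c) - I.lower (s c))) =
          Matrix.of fun r c : Fin (k+1) => f r (I.upper (s c) - I.lower (s c)) := by
        ext r c
        rw [Matrix.of_apply, Matrix.of_apply, Function.update_of_ne (fun hcon => hi c hcon)]
      have hMeq2 : (Matrix.of fun r c : Fin (k+1) =>
          f r (I.upper (s c) - Function.update I.lower i x (s c))) =
          Matrix.of fun r c : Fin (k+1) => f r (I.upper (s c) - I.lower (s c)) := by
        ext r c
        rw [Matrix.of_apply, Matrix.of_apply, Function.update_of_ne (fun hcon => hi c hcon)]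
      simp only [hν]
      rw [hMeq1, hMeq2]
      rw [← Finset.mul_prod_erase sc _ hisc, ← Finset.mul_prod_erase sc
        (fun j => h j (I.upper j - Function.update I.lower i x j)) hisc,
        ← Finset.mul_prod_erase sc (fun j => h j (I.upper j - I.lower j)) hisc]
      have hrest1 : ∀ j ∈ sc.erase i, h j (Function.update I.upper i x j - I.lower j) =
          h j (I.upper j - I.lower j) := fun j hj => by
        rw [Function.update_of_ne (Finset.ne_of_mem_erase hj)]
      have hrest2 : ∀ j ∈ sc.erase i, h j (I.upper j - Function.update I.lower i x j) =
          h j (I.upper j - I.lower j) := fun j hj => by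
        rw [Function.update_of_ne (Finset.ne_of_mem_erase hj)]
      rw [Finset.prod_congr rfl hrest1, Finset.prod_congr rfl hrest2,
        Function.update_self, Function.update_self]
      have hadd : h i (x - I.lower i) + h i (I.upper i - x) = h i (I.upper i - I.lower i) := by
        rw [← map_add]
        congr 1
        ring
      rw [← hadd]
      ring
  let F : BoxIntegral.BoxAdditiveMap (Fin n) ℚ ⊤ :=
    BoxIntegral.BoxAdditiveMap.ofMapSplitAdd ν ⊤ hsplit
  -- the prepartition coming from the dissection
  let π : BoxIntegral.Prepartition B.toBI :=
    { boxes := Finset.univ.image fun i => (t i).toBI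
      le_of_mem' := by
        intro J hJ
        obtain ⟨i, -, rfl⟩ := Finset.mem_image.1 hJ
        refine Box.toBI_le_toBI ?_
        rw [← hd.2]
        exact Set.subset_iUnion (fun i => (t i).toSet) i
      pairwiseDisjoint := by
        intro J₁ h₁ J₂ h₂ hne
        rw [Finset.mem_coe, Finset.mem_image] at h₁ h₂
        obtain ⟨i, -, rfl⟩ := h₁
        obtain ⟨j, -, rfl⟩ := h₂
        have hij : i ≠ j := fun hcon => hne (by rw [hcon])
        exact Box.disjoint_toBI (hd.1 i j hij) }
  have hπ : π.IsPartition := by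
    intro x hx
    obtain ⟨i, hi⟩ := exists_mem_toBI hd hx
    exact ⟨(t i).toBI, Finset.mem_image_of_mem _ (Finset.mem_univ i), hi⟩
  have hsum := F.sum_partition_boxes le_top hπ
  have hFν : ∀ J, F J = ν J := fun J => rfl
  rw [show π.boxes = Finset.univ.image fun i => (t i).toBI from rfl,
    Finset.sum_image (fun i _ j _ hij => toBI_inj_of_dissection hd hij)] at hsum
  -- each bar has measure zero
  have hzero : ∀ i, F ((t i).toBI) = 0 := by
    intro i
    have hcard : (Finset.univ.image (t i).side).card < (Finset.univ : Finset (Fin (k+1))).card :=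
      lt_of_le_of_lt (hbar i) (by simp)
    obtain ⟨r, -, r', -, hrr', heq⟩ := Finset.exists_ne_map_eq_of_card_lt_of_maps_to hcard
      (fun r _ => Finset.mem_image_of_mem (t i).side (Finset.mem_univ (s r)))
    have hdet : (Matrix.of fun r c : Fin (k+1) =>
        f r ((t i).toBI.upper (s c) - (t i).toBI.lower (s c))).det = 0 := by
      apply Matrix.det_zero_of_column_eq hrr'
      intro rr
      rw [Matrix.of_apply, Matrix.of_apply]
      show f rr ((t i).side (s r)) = f rr ((t i).side (s r'))
      rw [heq]
    rw [hFν]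
    simp only [hν]
    rw [hdet, zero_mul]
  -- the big box has nonzero measure
  have hBside : ∀ j, B.toBI.upper j - B.toBI.lower j = a j := by
    intro j
    rw [← hB]
    rfl
  have hBne : F B.toBI ≠ 0 := by
    rw [hFν]
    simp only [hν]
    have hMat : (Matrix.of fun r c : Fin (k+1) =>
        f r (B.toBI.upper (s c) - B.toBI.lower (s c))) = 1 := by
      ext r c
      rw [Matrix.of_apply, hBside (s c), hdelta r c, Matrix.one_apply]
    rw [hMat, Matrix.det_one, one_mul]
    rw [Finset.prod_ne_zero_iff]
    intro j hj
    rw [hBside j]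
    exact hhne j
  apply hBne
  rw [← hsum]
  exact Finset.sum_eq_zero fun i _ => hzero i
end

section
/- If positive real numbers x₁, …, xₙ span a k-dimensional vector space over ℚ, then there exist positive reals e₁, …, e_k such that each xⱼ is a linear combination of e₁, …, e_k with nonnegative integer coefficients. -/

-- Step 1: positive spanning family of size k
lemma exists_pos_spanning (n k : ℕ) (x : Fin n → ℝ) (hx : ∀ i, 0 < x i)
    (hrank : Module.rank ℚ (Submodule.span ℚ (Set.range x)) = k) :
    ∃ f : Fin k → ℝ, (∀ i, 0 < f i) ∧ ∀ j, ∃ a : Fin k → ℚ, ∑ i, a i • f i = x j := by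
  obtain ⟨b, hbsub, hbspan, hbli⟩ := exists_linearIndependent ℚ (Set.range x)
  have hbfin : b.Finite := (Set.finite_range x).subset hbsub
  haveI := hbfin.fintype
  have hcard : Fintype.card b = k := by
    have h1 := rank_span_set hbli
    rw [hbspan, hrank] at h1
    rw [Cardinal.mk_fintype] at h1
    exact_mod_cast h1.symm
  let eqv : Fin k ≃ b := (Fintype.equivFinOfCardEq hcard).symm
  refine ⟨fun i => (eqv i : ℝ), ?_, ?_⟩
  · intro i
    obtain ⟨j, hj⟩ := hbsub (eqv i).2
    simp only []; rw [← hj]; exact hx j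
  · intro j
    have hmem : x j ∈ Submodule.span ℚ (Set.range fun i => ((eqv i : ℝ))) := by
      have hrange : (Set.range fun i => ((eqv i : ℝ))) = b := by
        ext y; constructor
        · rintro ⟨i, rfl⟩; exact (eqv i).2
        · intro hy; exact ⟨eqv.symm ⟨y, hy⟩, by simp⟩
      rw [hrange, hbspan]
      exact Submodule.subset_span ⟨j, rfl⟩
    exact (Submodule.mem_span_range_iff_exists_fun ℚ).mp hmem


set_option maxHeartbeats 1000000 in
open Finset in
lemma main_construction (n k : ℕ) (hn : 0 < n) (hk : 0 < k) (x : Fin n → ℝ)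
    (hx : ∀ i, 0 < x i) (f : Fin k → ℝ) (hf : ∀ i, 0 < f i)
    (a : Fin n → Fin k → ℚ) (ha : ∀ j, ∑ i, (a j i : ℝ) * f i = x j) :
    ∃ e : Fin k → ℝ, (∀ i, 0 < e i) ∧ ∃ c : Fin n → Fin k → ℚ,
      (∀ j i, 0 < c j i) ∧ ∀ j, x j = ∑ i, (c j i : ℝ) * e i := by
  have hne : (Finset.univ : Finset (Fin k)).Nonempty := ⟨⟨0, hk⟩, mem_univ _⟩
  have hnen : (Finset.univ : Finset (Fin n)).Nonempty := ⟨⟨0, hn⟩, mem_univ _⟩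
  set Sf : ℝ := ∑ i, f i with hSf
  have hSfpos : 0 < Sf := Finset.sum_pos (fun i _ => hf i) hne
  set B : ℝ := 1 + ∑ j, ∑ i, |(a j i : ℝ)| with hBdef
  have habs_nonneg : ∀ j : Fin n, 0 ≤ ∑ i, |(a j i : ℝ)| :=
    fun j => Finset.sum_nonneg fun i _ => abs_nonneg _
  have hBpos : 0 < B := by
    have : 0 ≤ ∑ j, ∑ i, |(a j i : ℝ)| := Finset.sum_nonneg fun j _ => habs_nonneg j
    simp only [hBdef]; linarith
  have hrowB : ∀ j, (∑ i, |(a j i : ℝ)|) + 1 ≤ B := by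
    intro j
    have : (∑ i, |(a j i : ℝ)|) ≤ ∑ j, ∑ i, |(a j i : ℝ)| :=
      Finset.single_le_sum (fun j _ => habs_nonneg j) (mem_univ j)
    simp only [hBdef]; linarith
  have hentryB : ∀ j i, |(a j i : ℝ)| + 1 ≤ B := by
    intro j i
    have h1 : |(a j i : ℝ)| ≤ ∑ i, |(a j i : ℝ)| :=
      Finset.single_le_sum (f := fun t => |(a j t : ℝ)|) (fun i _ => abs_nonneg _) (mem_univ i)
    have := hrowB j; linarith
  set m : ℝ := Finset.univ.inf' hnen x with hm
  have hmpos : 0 < m := by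
    obtain ⟨j, _, hj⟩ := Finset.exists_mem_eq_inf' hnen x
    rw [hm, hj]; exact hx j
  have hmle : ∀ j, m ≤ x j := fun j => Finset.inf'_le _ (mem_univ j)
  obtain ⟨ε, hε0, hε1⟩ := exists_rat_btwn (show (0:ℝ) < m / (2 * B) by positivity)
  have hεpos : (0:ℝ) < ε := hε0
  have hεB : (ε:ℝ) * B < m / 2 := by
    rw [lt_div_iff₀ (by positivity)] at hε1
    nlinarith
  set fmin : ℝ := Finset.univ.inf' hne f with hfm
  have hfminpos : 0 < fmin := by
    obtain ⟨i, _, hi⟩ := Finset.exists_mem_eq_inf' hne f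
    rw [hfm, hi]; exact hf i
  have hfminle : ∀ i, fmin ≤ f i := fun i => Finset.inf'_le _ (mem_univ i)
  set δ : ℝ := min (m / (2 * B)) ((ε:ℝ) * fmin / Sf) with hδ
  have hδpos : 0 < δ := lt_min (by positivity) (by positivity)
  have hδ1 : δ * B ≤ m / 2 := by
    have h1 : δ ≤ m / (2 * B) := min_le_left _ _
    rw [le_div_iff₀ (by positivity)] at h1
    nlinarith
  have hδ2 : δ * Sf ≤ (ε:ℝ) * fmin := by
    have h1 : δ ≤ (ε:ℝ) * fmin / Sf := min_le_right _ _
    rw [← le_div_iff₀ hSfpos]; exact h1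
  choose q hq1 hq2 using fun i : Fin k =>
    exists_rat_btwn (show f i < f i + δ from lt_add_of_pos_right _ hδpos)
  set Sq : ℝ := ∑ i, ((q i : ℝ)) with hSq
  have hSqgt : Sf < Sq := Finset.sum_lt_sum_of_nonempty hne fun i _ => hq1 i
  have hden : 0 < (ε:ℝ) + Sq := by linarith
  set T : ℝ := Sf / ((ε:ℝ) + Sq) with hT
  have hTpos : 0 < T := div_pos hSfpos hden
  set e : Fin k → ℝ := fun i => (f i - (q i : ℝ) * T) / (ε:ℝ) with he
  have hεe : ∀ i, (ε:ℝ) * e i = f i - (q i : ℝ) * T := by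
    intro i; rw [he]; field_simp
  have hepos : ∀ i, 0 < e i := by
    intro i
    have key : (q i : ℝ) * Sf < f i * ((ε:ℝ) + Sq) := by
      have h1 : (q i : ℝ) * Sf < (f i + δ) * Sf :=
        mul_lt_mul_of_pos_right (hq2 i) hSfpos
      have h2 : (f i + δ) * Sf ≤ f i * ((ε:ℝ) + Sf) := by
        have := hfminle i
        have hεf : δ * Sf ≤ (ε:ℝ) * f i := by nlinarith [hδ2, hεpos]
        nlinarith
      have h3 : f i * ((ε:ℝ) + Sf) < f i * ((ε:ℝ) + Sq) :=
        mul_lt_mul_of_pos_left (by linarith) (hf i)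
      linarith
    have : (q i : ℝ) * T < f i := by
      rw [hT, ← mul_div_assoc, div_lt_iff₀ hden]
      exact key
    rw [he]; exact div_pos (by linarith) hεpos
  clear_value Sf B m fmin δ Sq T e
  refine ⟨e, hepos, fun j i => ε * a j i + ∑ t, a j t * q t, fun j i => ?_, fun j => ?_⟩
  -- positivity of coefficients
  case _ =>
    have hAq : x j - m/2 < ∑ t, (a j t:ℝ) * (q t:ℝ) := by
      have hdiff : ∑ t, (a j t:ℝ)*(q t:ℝ) - x j = ∑ t, (a j t:ℝ)*((q t:ℝ) - f t) := by
        rw [← ha j, ← Finset.sum_sub_distrib]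
        congr 1; funext t; ring
      have hb : |∑ t, (a j t:ℝ)*((q t:ℝ)-f t)| ≤ (∑ t, |(a j t:ℝ)|) * δ := by
        calc |∑ t, (a j t:ℝ)*((q t:ℝ)-f t)| ≤ ∑ t, |(a j t:ℝ)*((q t:ℝ)-f t)| :=
              Finset.abs_sum_le_sum_abs _ _
          _ ≤ ∑ t, |(a j t:ℝ)| * δ := by
              refine Finset.sum_le_sum fun t _ => ?_
              rw [abs_mul]
              refine mul_le_mul_of_nonneg_left ?_ (abs_nonneg _)
              rw [abs_le]
              constructor <;> [linarith [hq1 t, hδpos]; linarith [hq2 t]]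
          _ = (∑ t, |(a j t:ℝ)|) * δ := by rw [Finset.sum_mul]
      have habs := abs_le.mp hb
      have hmul : (∑ t, |(a j t:ℝ)|) * δ ≤ (B-1) * δ :=
        mul_le_mul_of_nonneg_right (by linarith [hrowB j]) hδpos.le
      linarith [hdiff, habs.1, hδ1, hδpos, hmul]
    have hre : (0:ℝ) < ((ε * a j i + ∑ t, a j t * q t : ℚ) : ℝ) := by
      push_cast
      have h1 : (ε:ℝ) * (-|(a j i:ℝ)|) ≤ (ε:ℝ) * (a j i:ℝ) :=
        mul_le_mul_of_nonneg_left (neg_abs_le _) hεpos.le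
      have h2 : (ε:ℝ) * (|(a j i:ℝ)| + 1) ≤ (ε:ℝ) * B :=
        mul_le_mul_of_nonneg_left (hentryB j i) hεpos.le
      linarith [hmle j, hεB, hAq, h1, h2]
    exact_mod_cast hre
  case _ =>
    have hE : ∑ i, e i = T := by
      have h1 : ∑ i, e i = (Sf - Sq * T)/(ε:ℝ) := by
        simp only [he]
        rw [hSf, hSq, ← Finset.sum_div, Finset.sum_sub_distrib, ← Finset.sum_mul]
      rw [h1, hT]
      field_simp [hden.ne']
      ring
    have hterm : ∀ i ∈ Finset.univ, ((ε * a j i + ∑ t, a j t * q t : ℚ):ℝ) * e i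
        = ((a j i:ℝ) * f i - ((a j i:ℝ)*(q i:ℝ))*T) + (∑ t, (a j t:ℝ)*(q t:ℝ)) * e i := by
      intro i _
      have h := hεe i
      push_cast
      linear_combination (a j i:ℝ) * h
    calc x j = ∑ i, (((a j i:ℝ) * f i - ((a j i:ℝ)*(q i:ℝ))*T) + (∑ t, (a j t:ℝ)*(q t:ℝ)) * e i) := by
          rw [Finset.sum_add_distrib, Finset.sum_sub_distrib, ← Finset.sum_mul, ← Finset.mul_sum,
            hE, ha j]
          ring
      _ = ∑ i, ((ε * a j i + ∑ t, a j t * q t : ℚ):ℝ) * e i :=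
          (Finset.sum_congr rfl hterm).symm


open Finset in
lemma nat_coeffs (n k : ℕ) (x : Fin n → ℝ) (e : Fin k → ℝ) (hepos : ∀ i, 0 < e i)
    (c : Fin n → Fin k → ℚ) (hc : ∀ j i, 0 < c j i)
    (hid : ∀ j, x j = ∑ i, (c j i : ℝ) * e i) :
    ∃ e' : Fin k → ℝ, (∀ i, 0 < e' i) ∧
      ∀ j, ∃ cN : Fin k → ℕ, x j = ∑ i, (cN i : ℝ) * e' i := by
  set M : ℕ := ∏ j, ∏ i, (c j i).den with hMdef
  have hM : 0 < M := Finset.prod_pos fun j _ => Finset.prod_pos fun i _ => (c j i).pos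
  have hMR : (0:ℝ) < M := by exact_mod_cast hM
  refine ⟨fun i => e i / M, fun i => div_pos (hepos i) hMR, fun j => ?_⟩
  have hdvd : ∀ i, (c j i).den ∣ M := by
    intro i
    rw [hMdef]
    exact dvd_trans (Finset.dvd_prod_of_mem (fun i => (c j i).den) (mem_univ i))
      (Finset.dvd_prod_of_mem (fun j => ∏ i, (c j i).den) (mem_univ j))
  have hint : ∀ i, ∃ z : ℤ, ((M:ℚ) * c j i) = z ∧ 0 ≤ z := by
    intro i
    obtain ⟨t, ht⟩ := hdvd i
    have hden0 : (((c j i).den : ℚ)) ≠ 0 := by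
      exact_mod_cast (c j i).den_nz
    have h2 : ((c j i).den : ℚ) * c j i = (c j i).num := by
      rw [mul_comm]
      exact ((div_eq_iff hden0).mp (Rat.num_div_den _)).symm
    refine ⟨(t:ℤ) * (c j i).num, ?_, ?_⟩
    · rw [ht]; push_cast; rw [mul_comm ((c j i).den : ℚ) (t:ℚ), mul_assoc, h2]
    · have hpos : (0:ℚ) < (M:ℚ) * c j i := by
        have := hc j i
        positivity
      have : (0:ℚ) ≤ ((t:ℤ) * (c j i).num : ℤ) := by
        rw [← show ((M:ℚ) * c j i) = ((t:ℤ) * (c j i).num : ℤ) from by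
          rw [ht]; push_cast; rw [mul_comm ((c j i).den : ℚ) (t:ℚ), mul_assoc, h2]]
        exact hpos.le
      exact_mod_cast this
  choose z hz hz0 using hint
  refine ⟨fun i => (z i).toNat, ?_⟩
  rw [hid j]
  refine Finset.sum_congr rfl fun i _ => ?_
  have h1 : ((z i : ℚ) : ℝ) = (M:ℝ) * (c j i : ℝ) := by
    rw [← hz i]; push_cast; ring
  have h2 : (((z i).toNat : ℕ) : ℝ) = ((z i : ℤ) : ℝ) := by
    exact_mod_cast congrArg (fun w : ℤ => (w : ℝ)) (Int.toNat_of_nonneg (hz0 i))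
  rw [h2]
  have h3 : ((z i : ℤ) : ℝ) = ((z i : ℚ) : ℝ) := by push_cast; ring
  rw [h3, h1]
  field_simp

/-- If positive reals `x₁, …, xₙ` span a `k`-dimensional `ℚ`-vector space, there are
positive reals `e₁, …, e_k` expressing each `xⱼ` as a nonnegative integer combination. -/
theorem positive_basis_conclusion (n k : ℕ) (x : Fin n → ℝ) (hx : ∀ i, 0 < x i)
    (hrank : Module.rank ℚ (Submodule.span ℚ (Set.range x)) = k) :
    ∃ e : Fin k → ℝ, (∀ i, 0 < e i) ∧
      ∀ j, ∃ c : Fin k → ℕ, x j = ∑ i, (c i : ℝ) * e i := by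
  rcases Nat.eq_zero_or_pos n with hn | hn
  · subst hn
    exact ⟨fun _ => 1, fun _ => one_pos, fun j => j.elim0⟩
  obtain ⟨f, hfpos, hrep⟩ := exists_pos_spanning n k x hx hrank
  choose a ha using hrep
  have ha' : ∀ j, ∑ i, (a j i : ℝ) * f i = x j := by
    intro j
    rw [← ha j]
    exact Finset.sum_congr rfl fun i _ => (Rat.smul_def _ _).symm
  rcases Nat.eq_zero_or_pos k with hk | hk
  · exfalso
    have h0 := ha' ⟨0, hn⟩
    subst hk
    simp only [Finset.univ_eq_empty, Finset.sum_empty] at h0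
    exact absurd h0.symm (ne_of_gt (hx _))
  obtain ⟨e, hepos, c, hcpos, hid⟩ := main_construction n k hn hk x hx f hfpos a ha'
  obtain ⟨e2, he2pos, hfin⟩ := nat_coeffs n k x e hepos c hcpos hid
  exact ⟨e2, he2pos, hfin⟩
end

section
/- Let G be an additive subgroup of ℝ and 1 ≤ K ≤ N. Call an N-dimensional axis-parallel box good if its side lengths in at least K different coordinate directions belong to G. If a box is partitioned into finitely many good boxes, then the box itself is good. -/
/- ----------------------------------------------------------------
   Auxiliary development: a finitary "atomic valuation" argument.
----------------------------------------------------------------- -/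

attribute [local instance] Classical.propDecidable

namespace GBT

noncomputable section

/-- Position of an atom: shift a face coordinate up or down by `δ`. -/
def pos (δ : ℝ) (p : ℝ × Bool) : ℝ := if p.2 then p.1 + δ else p.1 - δ

/-- Weight of an atom, relative to a function `h`. -/
def wt (h : ℝ → ℝ) (p : ℝ × Bool) : ℝ := if p.2 then -(h p.1) else h p.1

lemma exists_gap (F : Finset ℝ) :
    ∃ δ : ℝ, 0 < δ ∧ ∀ x ∈ F, ∀ y ∈ F, x < y → 2 * δ ≤ y - x := by
  classical
  set S : Finset ℝ := ((F ×ˢ F).filter fun p => p.1 < p.2).image fun p => p.2 - p.1 with hS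
  by_cases hne : S.Nonempty
  · refine ⟨S.min' hne / 2, ?_, ?_⟩
    · have key : ∀ z ∈ S, (0 : ℝ) < z := by
        intro z hz
        rw [hS] at hz
        simp only [Finset.mem_image, Finset.mem_filter] at hz
        obtain ⟨p, ⟨-, hp⟩, he⟩ := hz
        have := sub_pos.mpr hp
        linarith
      have h0 := key _ (S.min'_mem hne)
      linarith
    · intro x hx y hy hxy
      have hle : S.min' hne ≤ y - x := Finset.min'_le _ _ (by
        rw [hS]
        exact Finset.mem_image.mpr ⟨(x, y),
          Finset.mem_filter.mpr ⟨Finset.mem_product.mpr ⟨hx, hy⟩, hxy⟩, rfl⟩)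
      linarith
  · refine ⟨1, one_pos, fun x hx y hy hxy => absurd ?_ hne⟩
    exact ⟨y - x, by
      rw [hS]
      exact Finset.mem_image.mpr ⟨(x, y),
        Finset.mem_filter.mpr ⟨Finset.mem_product.mpr ⟨hx, hy⟩, hxy⟩, rfl⟩⟩

lemma pos_ne (F : Finset ℝ) (δ : ℝ) (hδ : 0 < δ)
    (hgap : ∀ x ∈ F, ∀ y ∈ F, x < y → 2 * δ ≤ y - x)
    (p : ℝ × Bool) (hp : p.1 ∈ F) {y : ℝ} (hy : y ∈ F) : pos δ p ≠ y := by
  obtain ⟨x, s⟩ := p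
  have hx : x ∈ F := hp
  intro he
  cases s
  · have he' : x - δ = y := he
    rcases lt_trichotomy x y with h | h | h
    · have := hgap x hx y hy h; linarith
    · linarith [h]
    · have := hgap y hy x hx h; linarith
  · have he' : x + δ = y := he
    rcases lt_trichotomy x y with h | h | h
    · have := hgap x hx y hy h; linarith
    · linarith [h]
    · have := hgap y hy x hx h; linarith

lemma sum_1d (F : Finset ℝ) (δ : ℝ) (hδ : 0 < δ)
    (hgap : ∀ x ∈ F, ∀ y ∈ F, x < y → 2 * δ ≤ y - x)
    (h : ℝ → ℝ) {a b : ℝ} (ha : a ∈ F) (hb : b ∈ F) (hab : a < b) :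
    ∑ p ∈ F ×ˢ (Finset.univ : Finset Bool),
      (if a < pos δ p ∧ pos δ p < b then wt h p else 0) = h b - h a := by
  rw [Finset.sum_product]
  have key : ∀ x ∈ F,
      (∑ s ∈ (Finset.univ : Finset Bool),
        if a < pos δ (x, s) ∧ pos δ (x, s) < b then wt h (x, s) else 0)
      = (if x = a then -h a else if x = b then h b else 0) := by
    intro x hx
    have e1 : a < x + δ ↔ a ≤ x := by
      constructor
      · intro h'
        by_contra h''
        push_neg at h''
        have := hgap x hx a ha h''
        linarith
      · intro h'; linarith
    have e2 : x + δ < b ↔ x < b := by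
      constructor
      · intro h'; linarith
      · intro h'; have := hgap x hx b hb h'; linarith
    have e3 : a < x - δ ↔ a < x := by
      constructor
      · intro h'; linarith
      · intro h'; have := hgap a ha x hx h'; linarith
    have e4 : x - δ < b ↔ x ≤ b := by
      constructor
      · intro h'
        by_contra h''
        push_neg at h''
        have := hgap b hb x hx h''
        linarith
      · intro h'; linarith
    rw [Fintype.sum_bool]
    have pt : pos δ (x, true) = x + δ := rfl
    have pf : pos δ (x, false) = x - δ := rfl
    have wtt : wt h (x, true) = -h x := rfl
    have wtf : wt h (x, false) = h x := rfl
    rw [pt, pf, wtt, wtf]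
    by_cases hxa : x = a
    · subst hxa
      rw [if_pos ⟨e1.mpr le_rfl, e2.mpr hab⟩,
        if_neg (fun hc => lt_irrefl x (e3.mp hc.1)), if_pos rfl]
      ring
    · by_cases hxb : x = b
      · subst hxb
        rw [if_neg (fun hc => lt_irrefl x (e2.mp hc.2)),
          if_pos ⟨e3.mpr hab, e4.mpr le_rfl⟩, if_neg hxa, if_pos rfl]
        ring
      · have c1 : (a < x + δ ∧ x + δ < b) ↔ (a < x ∧ x < b) := by
          rw [e1, e2]
          constructor
          · rintro ⟨h1, h2⟩; exact ⟨lt_of_le_of_ne h1 (Ne.symm hxa), h2⟩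
          · rintro ⟨h1, h2⟩; exact ⟨le_of_lt h1, h2⟩
        have c2 : (a < x - δ ∧ x - δ < b) ↔ (a < x ∧ x < b) := by
          rw [e3, e4]
          constructor
          · rintro ⟨h1, h2⟩; exact ⟨h1, lt_of_le_of_ne h2 hxb⟩
          · rintro ⟨h1, h2⟩; exact ⟨h1, le_of_lt h2⟩
        rw [if_neg hxa, if_neg hxb]
        by_cases hc : a < x ∧ x < b
        · rw [if_pos (c1.mpr hc), if_pos (c2.mpr hc)]; ring
        · rw [if_neg (fun h' => hc (c1.mp h')), if_neg (fun h' => hc (c2.mp h'))]; ring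
  rw [Finset.sum_congr rfl key]
  have hsub : ({a, b} : Finset ℝ) ⊆ F := by
    intro x hx
    simp only [Finset.mem_insert, Finset.mem_singleton] at hx
    rcases hx with rfl | rfl <;> assumption
  rw [← Finset.sum_subset hsub (by
    intro x _ hx
    simp only [Finset.mem_insert, Finset.mem_singleton, not_or] at hx
    rw [if_neg hx.1, if_neg hx.2])]
  rw [Finset.sum_insert (by simp [ne_of_lt hab]), Finset.sum_singleton]
  rw [if_pos rfl, if_neg (ne_of_gt hab), if_pos rfl]
  ring

lemma prod_indicator {ι : Type*} [Fintype ι] (c : ι → Prop) [DecidablePred c]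
    [Decidable (∀ j, c j)] (w : ι → ℝ) :
    (if ∀ j, c j then ∏ j, w j else 0) = ∏ j, if c j then w j else 0 := by
  by_cases hc : ∀ j, c j
  · rw [if_pos hc]
    exact Finset.prod_congr rfl fun j _ => (if_pos (hc j)).symm
  · rw [if_neg hc]
    push_neg at hc
    obtain ⟨j, hj⟩ := hc
    exact (Finset.prod_eq_zero (Finset.mem_univ j)
      (show (if c j then w j else 0) = 0 from if_neg hj)).symm

lemma sum_box {N : ℕ} (F : Finset ℝ) (δ : ℝ) (hδ : 0 < δ)
    (hgap : ∀ x ∈ F, ∀ y ∈ F, x < y → 2 * δ ≤ y - x)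
    (h : Fin N → ℝ → ℝ) (P : Box N)
    (hl : ∀ j, P.lower j ∈ F) (hu : ∀ j, P.upper j ∈ F) :
    ∑ k ∈ Fintype.piFinset (fun _ : Fin N => F ×ˢ (Finset.univ : Finset Bool)),
      (if ∀ j, P.lower j < pos δ (k j) ∧ pos δ (k j) < P.upper j
        then ∏ j, wt (h j) (k j) else 0)
      = ∏ j, (h j (P.upper j) - h j (P.lower j)) := by
  have hrw : ∀ k : Fin N → ℝ × Bool,
      (if ∀ j, P.lower j < pos δ (k j) ∧ pos δ (k j) < P.upper j
        then ∏ j, wt (h j) (k j) else 0)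
      = ∏ j, (if P.lower j < pos δ (k j) ∧ pos δ (k j) < P.upper j
          then wt (h j) (k j) else 0) :=
    fun k => prod_indicator _ _
  rw [Finset.sum_congr rfl fun k _ => hrw k]
  have h2 : (∏ j, ∑ p ∈ F ×ˢ (Finset.univ : Finset Bool),
        (if P.lower j < pos δ p ∧ pos δ p < P.upper j then wt (h j) p else 0))
      = ∑ k ∈ Fintype.piFinset (fun _ : Fin N => F ×ˢ (Finset.univ : Finset Bool)),
        ∏ j, (if P.lower j < pos δ (k j) ∧ pos δ (k j) < P.upper j
          then wt (h j) (k j) else 0) :=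
    Finset.prod_univ_sum _ _
  rw [← h2]
  exact Finset.prod_congr rfl fun j _ =>
    sum_1d F δ hδ hgap (h j) (hl j) (hu j) (P.lower_lt_upper j)

lemma mem_toSet {n : ℕ} {P : Box n} {p : Fin n → ℝ} :
    p ∈ P.toSet ↔ ∀ j, P.lower j ≤ p j ∧ p j ≤ P.upper j :=
  ⟨fun hp j => hp j (Set.mem_univ j), fun hp j _ => hp j⟩

lemma mem_interiorSet {n : ℕ} {P : Box n} {p : Fin n → ℝ} :
    p ∈ P.interiorSet ↔ ∀ j, P.lower j < p j ∧ p j < P.upper j :=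
  ⟨fun hp j => hp j (Set.mem_univ j), fun hp j _ => hp j⟩

lemma dissection_sum {N m : ℕ} (B : Box N) (t : Fin m → Box N) (ht : IsDissection B t)
    (h : Fin N → ℝ → ℝ) (F : Finset ℝ) (δ : ℝ) (hδ : 0 < δ)
    (hgap : ∀ x ∈ F, ∀ y ∈ F, x < y → 2 * δ ≤ y - x)
    (hBF : ∀ j, B.lower j ∈ F ∧ B.upper j ∈ F)
    (htF : ∀ i j, (t i).lower j ∈ F ∧ (t i).upper j ∈ F) :
    ∑ i, ∏ j, (h j ((t i).upper j) - h j ((t i).lower j))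
      = ∏ j, (h j (B.upper j) - h j (B.lower j)) := by
  obtain ⟨hdisj, hcover⟩ := ht
  have hsub : ∀ i, (t i).toSet ⊆ B.toSet := fun i =>
    hcover ▸ Set.subset_iUnion (fun i => (t i).toSet) i
  -- an atom lying in the closed box lies in the open box
  have hint : ∀ (Q : Box N), (∀ j, Q.lower j ∈ F ∧ Q.upper j ∈ F) →
      ∀ k ∈ Fintype.piFinset (fun _ : Fin N => F ×ˢ (Finset.univ : Finset Bool)),
      (fun j => pos δ (k j)) ∈ Q.toSet →
      ∀ j, Q.lower j < pos δ (k j) ∧ pos δ (k j) < Q.upper j := by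
    intro Q hQ k hk hmem' j
    have hkj : (k j).1 ∈ F := by
      have := (Fintype.mem_piFinset.mp hk) j
      exact (Finset.mem_product.mp this).1
    have h1 := mem_toSet.mp hmem' j
    constructor
    · exact lt_of_le_of_ne h1.1 (Ne.symm (pos_ne F δ hδ hgap (k j) hkj (hQ j).1))
    · exact lt_of_le_of_ne h1.2 (pos_ne F δ hδ hgap (k j) hkj (hQ j).2)
  calc ∑ i, ∏ j, (h j ((t i).upper j) - h j ((t i).lower j))
      = ∑ i, ∑ k ∈ Fintype.piFinset (fun _ : Fin N => F ×ˢ (Finset.univ : Finset Bool)),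
          (if ∀ j, (t i).lower j < pos δ (k j) ∧ pos δ (k j) < (t i).upper j
            then ∏ j, wt (h j) (k j) else 0) := by
        refine Finset.sum_congr rfl fun i _ => ?_
        exact (sum_box F δ hδ hgap h (t i) (fun j => (htF i j).1) (fun j => (htF i j).2)).symm
    _ = ∑ k ∈ Fintype.piFinset (fun _ : Fin N => F ×ˢ (Finset.univ : Finset Bool)),
          ∑ i, (if ∀ j, (t i).lower j < pos δ (k j) ∧ pos δ (k j) < (t i).upper j
            then ∏ j, wt (h j) (k j) else 0) := Finset.sum_comm
    _ = ∑ k ∈ Fintype.piFinset (fun _ : Fin N => F ×ˢ (Finset.univ : Finset Bool)),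
          (if ∀ j, B.lower j < pos δ (k j) ∧ pos δ (k j) < B.upper j
            then ∏ j, wt (h j) (k j) else 0) := by
        refine Finset.sum_congr rfl fun k hk => ?_
        by_cases hex : ∃ i, ∀ j, (t i).lower j < pos δ (k j) ∧ pos δ (k j) < (t i).upper j
        · obtain ⟨i₀, hi₀⟩ := hex
          have hpB : ∀ j, B.lower j < pos δ (k j) ∧ pos δ (k j) < B.upper j := by
            apply hint B hBF k hk
            apply hsub i₀
            exact mem_toSet.mpr fun j => ⟨le_of_lt (hi₀ j).1, le_of_lt (hi₀ j).2⟩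
          rw [Finset.sum_eq_single i₀]
          · rw [if_pos hi₀, if_pos hpB]
          · intro i _ hne
            rw [if_neg]
            intro hi
            exact Set.disjoint_left.mp (hdisj i i₀ hne)
              (mem_interiorSet.mpr hi) (mem_interiorSet.mpr hi₀)
          · intro hi₀'
            exact absurd (Finset.mem_univ i₀) hi₀'
        · rw [if_neg, Finset.sum_eq_zero]
          · intro i _
            exact if_neg fun hi => hex ⟨i, hi⟩
          · intro hB
            have hpB : (fun j => pos δ (k j)) ∈ B.toSet :=
              mem_toSet.mpr fun j => ⟨le_of_lt (hB j).1, le_of_lt (hB j).2⟩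
            rw [← hcover] at hpB
            obtain ⟨i, hi⟩ := Set.mem_iUnion.mp hpB
            exact hex ⟨i, hint (t i) (htF i) k hk hi⟩
    _ = ∏ j, (h j (B.upper j) - h j (B.lower j)) :=
        sum_box F δ hδ hgap h B (fun j => (hBF j).1) (fun j => (hBF j).2)

end

end GBT

/-- If a box is partitioned into boxes each having side lengths in `G` in at least `K`
coordinate directions, then the box itself has side lengths in `G` in at least `K`
coordinate directions. -/
theorem good_box_theorem_general (N K : ℕ) (hK1 : 1 ≤ K) (hKN : K ≤ N)
    (G : AddSubgroup ℝ) (B : Box N) (m : ℕ) (t : Fin m → Box N)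
    (ht : IsDissection B t)
    (hgood : ∀ i, ∃ s : Finset (Fin N), K ≤ s.card ∧ ∀ j ∈ s, (t i).side j ∈ G) :
    ∃ s : Finset (Fin N), K ≤ s.card ∧ ∀ j ∈ s, B.side j ∈ G := by
  classical
  by_contra hcon
  set Good : Finset (Fin N) := Finset.univ.filter (fun j => B.side j ∈ G) with hGoodDef
  have hGoodCard : Good.card < K := by
    by_contra h'
    push_neg at h'
    exact hcon ⟨Good, h', fun j hj => (Finset.mem_filter.mp hj).2⟩
  set Bad : Finset (Fin N) := Finset.univ.filter (fun j => B.side j ∉ G) with hBadDef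
  have hcards : Good.card + Bad.card = N := by
    rw [hGoodDef, hBadDef, Finset.card_filter_add_card_filter_not]
    simp
  have hBadCard : N - K < Bad.card := by omega
  have hmeet : ∀ s : Finset (Fin N), K ≤ s.card → (s ∩ Bad).Nonempty := by
    intro s hs
    rw [← Finset.card_pos]
    have h1 : (s ∪ Bad).card ≤ N := le_trans (Finset.card_le_univ _) (by simp)
    have h2 := Finset.card_inter_add_card_union s Bad
    omega
  set h : Fin N → ℝ → ℝ :=
    fun j x => if j ∈ Bad then (if x - B.lower j ∈ G then (1 : ℝ) else 0) else x with hh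
  set F : Finset ℝ := Finset.univ.biUnion (fun j : Fin N =>
    insert (B.lower j) (insert (B.upper j)
      (Finset.univ.biUnion fun i => {(t i).lower j, (t i).upper j}))) with hF
  have hBF : ∀ j, B.lower j ∈ F ∧ B.upper j ∈ F := by
    intro j
    constructor <;>
      exact Finset.mem_biUnion.mpr ⟨j, Finset.mem_univ j, by simp⟩
  have htF : ∀ i j, (t i).lower j ∈ F ∧ (t i).upper j ∈ F := by
    intro i j
    constructor <;>
    · refine Finset.mem_biUnion.mpr ⟨j, Finset.mem_univ j, ?_⟩
      refine Finset.mem_insert_of_mem (Finset.mem_insert_of_mem ?_)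
      exact Finset.mem_biUnion.mpr ⟨i, Finset.mem_univ i, by simp⟩
  obtain ⟨δ, hδ, hgap⟩ := GBT.exists_gap F
  have hid := GBT.dissection_sum B t ht h F δ hδ hgap hBF htF
  have hLHS : ∀ i, ∏ j, (h j ((t i).upper j) - h j ((t i).lower j)) = 0 := by
    intro i
    obtain ⟨s, hsK, hsG⟩ := hgood i
    obtain ⟨j, hj⟩ := hmeet s hsK
    rw [Finset.mem_inter] at hj
    apply Finset.prod_eq_zero (Finset.mem_univ j)
    have hside : (t i).upper j - (t i).lower j ∈ G := hsG j hj.1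
    have hiff : ((t i).upper j - B.lower j ∈ G) ↔ ((t i).lower j - B.lower j ∈ G) := by
      constructor
      · intro hg
        have he : (t i).lower j - B.lower j
            = ((t i).upper j - B.lower j) - ((t i).upper j - (t i).lower j) := by ring
        rw [he]
        exact G.sub_mem hg hside
      · intro hg
        have he : (t i).upper j - B.lower j
            = ((t i).lower j - B.lower j) + ((t i).upper j - (t i).lower j) := by ring
        rw [he]
        exact G.add_mem hg hside
    simp only [hh]
    rw [if_pos hj.2, if_pos hj.2]
    by_cases hg : (t i).lower j - B.lower j ∈ G
    · rw [if_pos (hiff.mpr hg), if_pos hg]; ring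
    · rw [if_neg (fun hc => hg (hiff.mp hc)), if_neg hg]; ring
  have hRHS : ∏ j, (h j (B.upper j) - h j (B.lower j)) ≠ 0 := by
    apply Finset.prod_ne_zero_iff.mpr
    intro j _
    by_cases hj : j ∈ Bad
    · have hns : B.upper j - B.lower j ∉ G := by
        have h1 : j ∈ Finset.univ.filter (fun j => B.side j ∉ G) := hBadDef ▸ hj
        have := (Finset.mem_filter.mp h1).2
        simpa [Box.side] using this
      simp only [hh]
      rw [if_pos hj, if_pos hj, if_neg hns,
        if_pos (by rw [sub_self]; exact G.zero_mem)]
      norm_num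
    · simp only [hh]
      rw [if_neg hj, if_neg hj]
      exact ne_of_gt (sub_pos.mpr (B.lower_lt_upper j))
  rw [Finset.sum_eq_zero (fun i _ => hLHS i)] at hid
  exact hRHS hid.symm
end

section
/- It is impossible to fill a 6×6×6 box with 1×2×4 bricks (axis-parallel placements in arbitrary orientations). -/
open MeasureTheory Set

noncomputable def gg : ℝ → ℂ := fun x => Complex.exp ((Real.pi / 2 * Complex.I) * x)

lemma cst_ne : (Real.pi / 2 * Complex.I : ℂ) ≠ 0 := by
  simp [Complex.I_ne_zero, Real.pi_ne_zero, Complex.ofReal_ne_zero, div_eq_zero_iff]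

lemma gg_ne_zero (x : ℝ) : gg x ≠ 0 := Complex.exp_ne_zero _

lemma gg_add_four (x : ℝ) : gg (x + 4) = gg x := by
  unfold gg
  rw [Complex.ofReal_add, mul_add, Complex.exp_add,
    show (Real.pi / 2 * Complex.I : ℂ) * ((4:ℝ):ℂ) = 2 * Real.pi * Complex.I by push_cast; ring,
    Complex.exp_two_pi_mul_I, mul_one]

lemma gg_add_six (x : ℝ) : gg (x + 6) = -gg x := by
  unfold gg
  rw [Complex.ofReal_add, mul_add, Complex.exp_add,
    show (Real.pi / 2 * Complex.I : ℂ) * ((6:ℝ):ℂ) = 2 * Real.pi * Complex.I + Real.pi * Complex.I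
      by push_cast; ring,
    Complex.exp_add, Complex.exp_two_pi_mul_I, Complex.exp_pi_mul_I]
  ring

lemma icc_integral (a b : ℝ) (h : a ≤ b) :
    ∫ x in Set.Icc a b, gg x = (gg b - gg a) / (Real.pi / 2 * Complex.I) := by
  rw [MeasureTheory.integral_Icc_eq_integral_Ioc, ← intervalIntegral.integral_of_le h]
  exact integral_exp_mul_complex cst_ne


lemma toSet_meas {n : ℕ} (B : Box n) : MeasurableSet B.toSet :=
  MeasurableSet.univ_pi fun _ => measurableSet_Icc

lemma interior_meas {n : ℕ} (B : Box n) : MeasurableSet B.interiorSet :=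
  MeasurableSet.univ_pi fun _ => measurableSet_Ioo

lemma interior_subset_toSet {n : ℕ} (B : Box n) : B.interiorSet ⊆ B.toSet :=
  Set.pi_mono fun i _ => Set.Ioo_subset_Icc_self

lemma boundary_null {n : ℕ} (B : Box n) : volume (B.toSet \ B.interiorSet) = 0 := by
  have h1 : volume B.toSet = ∏ i, ENNReal.ofReal (B.upper i - B.lower i) := by
    rw [Box.toSet, volume_pi_pi]
    simp [Real.volume_Icc]
  have h2 : volume B.interiorSet = ∏ i, ENNReal.ofReal (B.upper i - B.lower i) := by
    rw [Box.interiorSet, volume_pi_pi]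
    simp [Real.volume_Ioo]
  have hfin : volume B.interiorSet ≠ ⊤ := by
    rw [h2]; exact ENNReal.prod_ne_top fun i _ => ENNReal.ofReal_ne_top
  rw [measure_diff (interior_subset_toSet B) (interior_meas B).nullMeasurableSet hfin, h1, h2,
    tsub_self]

lemma toSet_ae_interior {n : ℕ} (B : Box n) : B.toSet =ᵐ[volume] B.interiorSet := by
  rw [MeasureTheory.ae_eq_set]
  constructor
  · exact boundary_null B
  · rw [Set.diff_eq_empty.2 (interior_subset_toSet B)]; simp

lemma box_integral {n : ℕ} (B : Box n) :
    ∫ x in B.toSet, ∏ i, gg (x i) = ∏ i, ∫ x in Set.Icc (B.lower i) (B.upper i), gg x := by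
  rw [← MeasureTheory.integral_indicator (toSet_meas B)]
  have key : (B.toSet.indicator fun x => ∏ i, gg (x i)) =
      fun x : Fin n → ℝ => ∏ i, (Set.Icc (B.lower i) (B.upper i)).indicator gg (x i) := by
    funext x
    by_cases hx : x ∈ B.toSet
    · rw [Set.indicator_of_mem hx]
      exact Finset.prod_congr rfl fun i _ =>
        (Set.indicator_of_mem (hx i (Set.mem_univ i)) gg).symm
    · rw [Set.indicator_of_notMem hx]
      obtain ⟨i, hi⟩ := not_forall.mp fun h => hx (Set.mem_univ_pi.mpr h)
      exact (Finset.prod_eq_zero (Finset.mem_univ i) (Set.indicator_of_notMem hi gg)).symm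
  rw [key, MeasureTheory.volume_pi, MeasureTheory.integral_fintype_prod_eq_prod (ι := Fin n)
    (fun i => (Set.Icc (B.lower i) (B.upper i)).indicator gg)]
  exact Finset.prod_congr rfl fun i _ =>
    MeasureTheory.integral_indicator measurableSet_Icc

lemma dissection_sum {n m : ℕ} (B : Box n) (t : Fin m → Box n)
    (hd : ∀ i j, i ≠ j → Disjoint (t i).interiorSet (t j).interiorSet)
    (hc : (⋃ i, (t i).toSet) = B.toSet) :
    ∫ x in B.toSet, ∏ i, gg (x i) = ∑ j, ∫ x in (t j).toSet, ∏ i, gg (x i) := by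
  set f : (Fin n → ℝ) → ℂ := fun x => ∏ i, gg (x i) with hf
  have hcont : Continuous f := by
    apply continuous_finset_prod
    intro i _
    exact Complex.continuous_exp.comp (by continuity)
  have hcompact : IsCompact B.toSet := isCompact_univ_pi fun i => isCompact_Icc
  have hint : IntegrableOn f B.toSet := hcont.continuousOn.integrableOn_compact hcompact
  have hUae : (⋃ i, (t i).toSet) =ᵐ[volume] (⋃ i, (t i).interiorSet) := by
    rw [MeasureTheory.ae_eq_set]
    constructor
    · have hsub : (⋃ i, (t i).toSet) \ (⋃ i, (t i).interiorSet) ⊆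
          ⋃ i, ((t i).toSet \ (t i).interiorSet) := by
        rintro x ⟨hx1, hx2⟩
        obtain ⟨i, hi⟩ := Set.mem_iUnion.mp hx1
        exact Set.mem_iUnion.mpr ⟨i, hi, fun h => hx2 (Set.mem_iUnion.mpr ⟨i, h⟩)⟩
      exact measure_mono_null hsub (measure_iUnion_null fun i => boundary_null (t i))
    · apply measure_mono_null (Set.diff_subset_diff_left (Set.iUnion_mono
        fun i => interior_subset_toSet (t i)))
      rw [Set.diff_eq_empty.2 (le_refl _)]; simp
  calc ∫ x in B.toSet, f x = ∫ x in ⋃ i, (t i).toSet, f x := by rw [hc]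
    _ = ∫ x in ⋃ i, (t i).interiorSet, f x := setIntegral_congr_set hUae
    _ = ∑' j, ∫ x in (t j).interiorSet, f x := by
        apply MeasureTheory.integral_iUnion (fun i => interior_meas (t i))
          (fun i j hij => hd i j hij)
        apply hint.mono_set
        rw [← hc]
        exact Set.iUnion_mono fun i => interior_subset_toSet (t i)
    _ = ∑ j, ∫ x in (t j).interiorSet, f x := tsum_fintype _
    _ = ∑ j, ∫ x in (t j).toSet, f x :=
        Finset.sum_congr rfl fun j _ => setIntegral_congr_set (toSet_ae_interior (t j)).symm


/-- A `6 × 6 × 6` box cannot be filled by (axis-parallel, arbitrarily oriented)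
`1 × 2 × 4` bricks. -/

theorem no_brick_filling_of_cube :
    ∀ B : Box 3, B.side = (fun _ => (6 : ℝ)) →
      ¬ ∃ (m : ℕ) (t : Fin m → Box 3), IsDissection B t ∧
        ∀ i, ∃ σ : Equiv.Perm (Fin 3), (t i).side = ![1, 2, 4] ∘ σ := by
  intro B hB
  rintro ⟨m, t, ⟨hd, hc⟩, hbrick⟩
  -- every brick has integral 0
  have hbrick0 : ∀ j, ∫ x in (t j).toSet, ∏ i, gg (x i) = 0 := by
    intro j
    obtain ⟨σ, hσ⟩ := hbrick j
    rw [box_integral]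
    apply Finset.prod_eq_zero (Finset.mem_univ (σ.symm 2))
    have h4 : (t j).upper (σ.symm 2) = (t j).lower (σ.symm 2) + 4 := by
      have h := congrFun hσ (σ.symm 2)
      simp only [Box.side, Function.comp_apply, Equiv.apply_symm_apply] at h
      have h42 : (![1, 2, 4] : Fin 3 → ℝ) 2 = 4 := rfl
      rw [h42] at h
      linarith
    rw [icc_integral _ _ (le_of_lt ((t j).lower_lt_upper _)), h4, gg_add_four, sub_self,
      zero_div]
  -- the cube has nonzero integral
  have hcube : ∫ x in B.toSet, ∏ i, gg (x i) ≠ 0 := by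
    rw [box_integral]
    apply Finset.prod_ne_zero_iff.mpr
    intro i _
    have h6 : B.upper i = B.lower i + 6 := by
      have h := congrFun hB i
      simp only [Box.side] at h
      linarith
    rw [icc_integral _ _ (le_of_lt (B.lower_lt_upper _)), h6, gg_add_six]
    apply div_ne_zero _ cst_ne
    have := gg_ne_zero (B.lower i)
    intro h
    apply this
    have : -gg (B.lower i) - gg (B.lower i) = -(2 * gg (B.lower i)) := by ring
    rw [this, neg_eq_zero] at h
    simpa using h
  apply hcube
  rw [dissection_sum B t hd hc]
  exact Finset.sum_eq_zero fun j _ => hbrick0 j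
end
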